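/- Let ψ = Σᵢ₌₁ⁿ aᵢ eᵢ ∈ ℓ₂ⁿ with a₁ ≥ a₂ ≥ ... ≥ aₙ ≥ 0 and Σ aᵢ² ≤ 1. Then there exist l ∈ N, nonnegative coefficients β₁,...,β_l with Σ βₛ ≤ 2√(log₂ n), and nonempty subsets A₁,...,A_l of {1,...,n} such that ψ = Σₛ βₛ φₛ where φₛ = |Aₛ|^{−1/2} Σ_{i∈Aₛ} eᵢ. -/

import Mathlib

/-- Key analytic estimate: for `k ≥ 1`,
`(√(k+1) - √k)² ≤ (1/2)(log(k+1) - log k)`. -/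
lemma stmt4_aux {k : ℕ} (hk : 1 ≤ k) :
    (Real.sqrt (k + 1) - Real.sqrt k) ^ 2
      ≤ (1 / 2) * (Real.log (k + 1) - Real.log k) := by
  set x : ℝ := (k : ℝ) with hx
  have hx1 : (1 : ℝ) ≤ x := by rw [hx]; exact_mod_cast hk
  have hx0 : (0 : ℝ) < x := by linarith
  set sa := Real.sqrt x with hsa
  set sb := Real.sqrt (x + 1) with hsb
  have hsa2 : sa ^ 2 = x := Real.sq_sqrt (by linarith)
  have hsb2 : sb ^ 2 = x + 1 := Real.sq_sqrt (by linarith)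
  have hsa1 : 1 ≤ sa := by
    rw [hsa, show (1:ℝ) = Real.sqrt 1 by simp]
    exact Real.sqrt_le_sqrt (by linarith)
  have hsab : sa ≤ sb := Real.sqrt_le_sqrt (by linarith)
  -- log lower bound: log(x+1) - log x ≥ 1/(x+1)
  have hlog : 1 / (x + 1) ≤ Real.log (x + 1) - Real.log x := by
    have h1 : Real.log (x + 1) - Real.log x = Real.log ((x + 1) / x) := by
      rw [Real.log_div (by linarith) (by linarith)]
    have h2 : 1 - ((x + 1) / x)⁻¹ ≤ Real.log ((x + 1) / x) :=
      Real.one_sub_inv_le_log_of_pos (by positivity)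
    have h3 : ((x + 1) / x)⁻¹ = x / (x + 1) := by
      rw [inv_div]
    have h4 : 1 - x / (x + 1) = 1 / (x + 1) := by
      field_simp
      ring
    rw [h1]
    rw [h3, h4] at h2
    exact h2
  -- (sb - sa)^2 ≤ 1/(2(x+1))
  have hprod : (sb - sa) * (sb + sa) = 1 := by nlinarith [hsa2, hsb2]
  have hsum2 : 2 * (x + 1) ≤ (sb + sa) ^ 2 := by nlinarith [hsa2, hsb2, hsab, hsa1]
  have hprod2 : (sb - sa) ^ 2 * (sb + sa) ^ 2 = 1 := by
    rw [← mul_pow, hprod]; norm_num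
  have hkey : (sb - sa) ^ 2 * (2 * (x + 1)) ≤ 1 := by
    nlinarith [mul_le_mul_of_nonneg_left hsum2 (sq_nonneg (sb - sa)), hprod2]
  have hlog' : 1 ≤ (Real.log (x + 1) - Real.log x) * (x + 1) :=
    (div_le_iff₀ (by linarith)).mp hlog
  nlinarith [hkey, hlog', hx0, sq_nonneg (sb - sa)]

/-- Any vector `ψ = Σ aᵢ eᵢ` with decreasing nonnegative coefficients and `Σ aᵢ² ≤ 1`
can be written as `Σₛ βₛ φₛ` with `βₛ ≥ 0`, `Σ βₛ ≤ 2√(log₂ n)`, where each `φₛ`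
is the normalized indicator vector of a nonempty subset `Aₛ ⊆ {1,…,n}`. -/
theorem stmt_4 {n : ℕ} (hn : 2 ≤ n) (a : Fin n → ℝ)
    (hmono : Antitone a) (hpos : ∀ i, 0 ≤ a i)
    (hnorm : ∑ i, (a i) ^ 2 ≤ 1) :
    ∃ (l : ℕ) (β : Fin l → ℝ) (A : Fin l → Finset (Fin n)),
      (∀ s, 0 ≤ β s) ∧
      (∀ s, (A s).Nonempty) ∧
      (∑ s, β s ≤ 2 * Real.sqrt (Real.logb 2 n)) ∧
      (∀ i, a i = ∑ s, β s * (if i ∈ A s then (Real.sqrt (A s).card)⁻¹ else 0)) := by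
  classical
  -- the extended coefficient sequence
  set g : ℕ → ℝ := fun k => if h : k < n then a ⟨k, h⟩ else 0 with hgdef
  have hgval : ∀ i : Fin n, g i = a i := by
    intro i
    simp [hgdef, i.isLt]
  have hg_nonneg : ∀ k, 0 ≤ g k := by
    intro k
    simp only [hgdef]
    split
    · exact hpos _
    · exact le_refl 0
  have hg_anti : ∀ k, g (k + 1) ≤ g k := by
    intro k
    simp only [hgdef]
    split
    · rename_i h1
      have hk : k < n := Nat.lt_of_succ_lt h1
      rw [dif_pos hk]
      exact hmono (by simp [Fin.le_def])
    · split
      · exact hpos _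
      · exact le_refl 0
  refine ⟨n, fun s => (g s - g ((s : ℕ) + 1)) * Real.sqrt ((s : ℕ) + 1),
    fun s => Finset.Iic s, ?_, ?_, ?_, ?_⟩
  · intro s
    exact mul_nonneg (by linarith [hg_anti (s : ℕ)]) (Real.sqrt_nonneg _)
  · intro s
    exact ⟨s, Finset.mem_Iic.mpr le_rfl⟩
  · -- the bound on the sum of coefficients
    have hβsum : ∑ s : Fin n, (g s - g ((s : ℕ) + 1)) * Real.sqrt ((s : ℕ) + 1)
        = ∑ k ∈ Finset.range n, (g k - g (k + 1)) * Real.sqrt (k + 1) :=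
      Fin.sum_univ_eq_sum_range (fun k => (g k - g (k + 1)) * Real.sqrt (k + 1)) n
    -- Abel summation
    have abel : ∀ m : ℕ, ∑ k ∈ Finset.range m, (g k - g (k + 1)) * Real.sqrt (k + 1)
        = ∑ k ∈ Finset.range m, g k * (Real.sqrt (k + 1) - Real.sqrt k)
          - g m * Real.sqrt m := by
      intro m
      induction m with
      | zero => simp
      | succ m ih =>
        rw [Finset.sum_range_succ, Finset.sum_range_succ, ih]
        push_cast
        ring
    set T : ℝ := ∑ k ∈ Finset.range n, g k * (Real.sqrt (k + 1) - Real.sqrt k) with hT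
    have hc_nonneg : ∀ k : ℕ, 0 ≤ Real.sqrt (k + 1) - Real.sqrt k := by
      intro k
      have := Real.sqrt_le_sqrt (show (k : ℝ) ≤ (k : ℝ) + 1 by linarith)
      linarith
    have hT_nonneg : 0 ≤ T := by
      apply Finset.sum_nonneg
      intro k _
      exact mul_nonneg (hg_nonneg k) (hc_nonneg k)
    -- Cauchy–Schwarz
    have hCS := Finset.sum_mul_sq_le_sq_mul_sq (Finset.range n)
      (fun k => g k) (fun k => Real.sqrt (k + 1) - Real.sqrt k)
    have hg2 : ∑ k ∈ Finset.range n, g k ^ 2 ≤ 1 := by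
      have : ∑ k ∈ Finset.range n, g k ^ 2 = ∑ i : Fin n, (a i) ^ 2 := by
        rw [← Fin.sum_univ_eq_sum_range (fun k => g k ^ 2) n]
        exact Finset.sum_congr rfl fun i _ => by rw [hgval i]
      linarith
    -- bound on Σ c²
    have hc2 : ∑ k ∈ Finset.range n, (Real.sqrt (k + 1) - Real.sqrt k) ^ 2
        ≤ 1 + (1 / 2) * Real.log n := by
      have hbound : ∀ k ∈ Finset.range n, (Real.sqrt (k + 1) - Real.sqrt k) ^ 2
          ≤ (1 / 2) * (Real.log (k + 1) - Real.log k) + (if k = 0 then 1 else 0) := by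
        intro k _
        by_cases hk : k = 0
        · subst hk
          simp
        · have hk1 : 1 ≤ k := Nat.one_le_iff_ne_zero.mpr hk
          simpa [hk] using stmt4_aux hk1
      calc ∑ k ∈ Finset.range n, (Real.sqrt (k + 1) - Real.sqrt k) ^ 2
          ≤ ∑ k ∈ Finset.range n, ((1 / 2) * (Real.log (k + 1) - Real.log k)
              + (if k = 0 then 1 else 0)) := Finset.sum_le_sum hbound
        _ = (1 / 2) * (∑ k ∈ Finset.range n, (Real.log (k + 1) - Real.log k))
              + ∑ k ∈ Finset.range n, (if k = 0 then 1 else 0) := by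
            rw [Finset.sum_add_distrib, Finset.mul_sum]
        _ = 1 + (1 / 2) * Real.log n := by
            have h1 : ∑ k ∈ Finset.range n, (Real.log (k + 1) - Real.log k)
                = Real.log n := by
              have := Finset.sum_range_sub (fun k : ℕ => Real.log k) n
              simpa using this
            have h2 : ∑ k ∈ Finset.range n, (if k = 0 then (1:ℝ) else 0) = 1 := by
              rw [Finset.sum_ite_eq' (Finset.range n) 0 (fun _ => (1:ℝ))]
              simp only [Finset.mem_range, if_pos (show 0 < n by omega)]
            rw [h1, h2]
            ring
    -- arithmetic: 1 + (1/2) log n ≤ 4 logb 2 n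
    have hlogn : Real.log 2 ≤ Real.log n := Real.log_le_log (by norm_num) (by exact_mod_cast hn)
    have hlog2pos : (0:ℝ) < Real.log 2 := Real.log_pos (by norm_num)
    have hlog2lt : Real.log 2 < 0.6931471808 := Real.log_two_lt_d9
    have harith : 1 + (1 / 2) * Real.log n ≤ 4 * Real.logb 2 n := by
      rw [Real.logb,
        show (4:ℝ) * (Real.log n / Real.log 2) = (4 * Real.log n) / Real.log 2 by ring,
        le_div_iff₀ hlog2pos]
      nlinarith [hlogn, hlog2pos, hlog2lt]
    have hlogb_nonneg : 0 ≤ Real.logb 2 n :=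
      Real.logb_nonneg (by norm_num) (by exact_mod_cast Nat.one_le_of_lt hn)
    -- T² ≤ 4 logb 2 n
    have hT2 : T ^ 2 ≤ 4 * Real.logb 2 n := by
      calc T ^ 2 ≤ (∑ k ∈ Finset.range n, g k ^ 2)
            * ∑ k ∈ Finset.range n, (Real.sqrt (k + 1) - Real.sqrt k) ^ 2 := hCS
        _ ≤ 1 * (1 + (1 / 2) * Real.log n) := by
            apply mul_le_mul hg2 hc2 ?_ (by norm_num)
            · apply Finset.sum_nonneg; intro k _; positivity
        _ = 1 + (1 / 2) * Real.log n := one_mul _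
        _ ≤ 4 * Real.logb 2 n := harith
    have hTle : T ≤ 2 * Real.sqrt (Real.logb 2 n) := by
      have h4 : 2 * Real.sqrt (Real.logb 2 n) = Real.sqrt (4 * Real.logb 2 n) := by
        rw [show (4:ℝ) = 2 ^ 2 by norm_num, Real.sqrt_mul (by positivity),
          Real.sqrt_sq (by norm_num)]
      rw [h4]
      rw [Real.le_sqrt hT_nonneg (by positivity)]
      exact hT2
    rw [hβsum, abel n]
    have : 0 ≤ g n * Real.sqrt n := mul_nonneg (hg_nonneg n) (Real.sqrt_nonneg _)
    linarith
  · -- reconstruction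
    intro i
    have hterm : ∀ s : Fin n,
        (g s - g ((s : ℕ) + 1)) * Real.sqrt ((s : ℕ) + 1)
          * (if i ∈ Finset.Iic s then (Real.sqrt (Finset.Iic s).card)⁻¹ else 0)
        = (fun k : ℕ => if (i : ℕ) ≤ k then g k - g (k + 1) else 0) (s : ℕ) := by
      intro s
      rw [Fin.card_Iic]
      have hmem : (i ∈ Finset.Iic s) ↔ ((i : ℕ) ≤ (s : ℕ)) := by
        rw [Finset.mem_Iic, Fin.le_def]
      by_cases hle : (i : ℕ) ≤ (s : ℕ)
      · rw [if_pos (hmem.mpr hle)]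
        simp only [hle, if_true]
        have hcast : ((((s : ℕ) + 1 : ℕ)) : ℝ) = ((s : ℕ) : ℝ) + 1 := by push_cast; ring
        rw [hcast]
        have hne : Real.sqrt (((s : ℕ) : ℝ) + 1) ≠ 0 := by positivity
        rw [mul_assoc, mul_inv_cancel₀ hne, mul_one]
      · rw [if_neg (fun h => hle (hmem.mp h))]
        simp [hle]
    calc a i = g i := (hgval i).symm
      _ = ∑ s : Fin n, (g s - g ((s : ℕ) + 1)) * Real.sqrt ((s : ℕ) + 1)
            * (if i ∈ Finset.Iic s then (Real.sqrt (Finset.Iic s).card)⁻¹ else 0) := by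
          rw [Finset.sum_congr rfl fun s _ => hterm s,
            Fin.sum_univ_eq_sum_range (fun k : ℕ => if (i : ℕ) ≤ k then g k - g (k + 1) else 0) n]
          rw [← Finset.sum_filter]
          have hfilter : Finset.filter (fun k => (i : ℕ) ≤ k) (Finset.range n)
              = Finset.Ico (i : ℕ) n := by
            ext k
            simp [Finset.mem_filter, Finset.mem_range, Finset.mem_Ico, and_comm]
          rw [hfilter, Finset.sum_Ico_eq_sub _ i.isLt.le,
            Finset.sum_range_sub' g n, Finset.sum_range_sub' g (i : ℕ)]
          have hgn : g n = 0 := by simp [hgdef]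
          rw [hgn]
          ring
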